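/- arXiv:2004.02453 — 3 statements merged into one kernel-verified Lean document; each statement's English description precedes it below -/
import Mathlib

section
/- For a closed subset C of K the following are equivalent: (i) C is a convex-trace set with respect to Φ; (ii) there exist a family {φ_i}_{i∈I} ⊆ Φ that is uniformly bounded on K and a bounded family {λ_i}_{i∈I} ⊆ ℝ such that C = ∩_{i∈I} {x ∈ K : φ_i(x) ≤ λ_i}; (iii) there exists a lower semicontinuous convex-trace function f on K such that C = {x ∈ K : f(x) ≤ 0}. -/
open MeasureTheory Set

section Defs

variable {K : Type*} [TopologicalSpace K] [CompactSpace K]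

/-- The canonical injection `δ^Φ : K → Φ*`, `δ^Φ(x)(φ) = φ(x)`. -/
noncomputable def deltaPhi (Φ : Submodule ℝ C(K, ℝ)) (x : K) : WeakDual ℝ ↥Φ :=
  (ContinuousMap.evalCLM ℝ x).comp Φ.subtypeL

/-- The set `K(Φ) = {Q ∈ Φ* : ‖Q‖ = Q(𝟏) = 1}`. -/
noncomputable def KPhi (Φ : Submodule ℝ C(K, ℝ))
    (h1 : ContinuousMap.const K (1 : ℝ) ∈ Φ) : Set (WeakDual ℝ ↥Φ) :=
  {Q | @norm _ (@ContinuousLinearMap.hasOpNorm ℝ ℝ ↥Φ ℝ _ _ _ _ _ _ _) (WeakDual.toStrongDual Q) = 1 ∧ Q ⟨ContinuousMap.const K (1 : ℝ), h1⟩ = 1}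

end Defs

section DefsTC

variable {K : Type*} [TopologicalSpace K] [CompactSpace K]

/-- A closed set `C ⊆ K` is convex-trace w.r.t. `Φ` if `δ^Φ(C) = δ^Φ(K) ∩ Ĉ` for some
weak*-closed convex subset `Ĉ` of `K(Φ)`. -/
def TraceConvexSet (Φ : Submodule ℝ C(K, ℝ)) (h1 : ContinuousMap.const K (1 : ℝ) ∈ Φ)
    (C : Set K) : Prop :=
  IsClosed C ∧ ∃ Ch : Set (WeakDual ℝ ↥Φ), Ch ⊆ KPhi Φ h1 ∧ IsClosed Ch ∧ Convex ℝ Ch ∧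
    deltaPhi Φ '' C = deltaPhi Φ '' Set.univ ∩ Ch

end DefsTC

section DefsLsc

variable {K : Type*} [TopologicalSpace K] [CompactSpace K]

/-- `f : K → ℝ` is a lower semicontinuous convex-trace function if `f = F ∘ δ^Φ` for some
convex weak*-lower semicontinuous real-valued `F` on `K(Φ)`. -/
def LscConvexTrace (Φ : Submodule ℝ C(K, ℝ)) (h1 : ContinuousMap.const K (1 : ℝ) ∈ Φ)
    (f : K → ℝ) : Prop :=
  ∃ F : WeakDual ℝ ↥Φ → ℝ, ConvexOn ℝ (KPhi Φ h1) F ∧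
    LowerSemicontinuousOn F (KPhi Φ h1) ∧ ∀ x : K, f x = F (deltaPhi Φ x)

end DefsLsc

section Aux

open Topology

/-- Every continuous linear functional on the weak-* dual is evaluation at a point. -/
theorem weakDual_dual_eval {E : Type*} [AddCommGroup E] [Module ℝ E] [TopologicalSpace E]
    (L : WeakDual ℝ E →L[ℝ] ℝ) : ∃ e : E, ∀ Q : WeakDual ℝ E, L Q = Q e := by
  classical
  set B := topDualPairing ℝ E
  have hnhds : L ⁻¹' Metric.ball (0:ℝ) 1 ∈ 𝓝 (0 : WeakDual ℝ E) := by
    have : Metric.ball (0:ℝ) 1 ∈ 𝓝 (L 0) := by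
      simp [Metric.ball_mem_nhds]
    exact L.continuous.continuousAt.preimage_mem_nhds this
  obtain ⟨U, hU, hUsub⟩ := (LinearMap.hasBasis_weakBilin B).mem_iff.1 hnhds
  obtain ⟨s, r, hr, rfl⟩ := (SeminormFamily.basisSets_iff _).1 hU
  have hker : (⨅ e : (s : Set E), LinearMap.ker (B.flip e)) ≤
      LinearMap.ker (L : WeakDual ℝ E →ₗ[ℝ] ℝ) := by
    intro Q hQ
    simp only [Submodule.mem_iInf, LinearMap.mem_ker] at hQ ⊢
    by_contra hLQ
    obtain ⟨t, ht⟩ := exists_nat_gt (1 / |L Q|)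
    have habs : 0 < |L Q| := abs_pos.2 hLQ
    have hmem : ((t : ℝ) • Q : WeakBilin B) ∈ Seminorm.ball (s.sup B.toSeminormFamily) 0 r := by
      rw [Seminorm.mem_ball_zero]
      refine Seminorm.finset_sup_apply_lt hr fun e he => ?_
      have h0 : B Q e = 0 := by
        have := hQ ⟨e, he⟩
        simpa only [LinearMap.flip_apply] using this
      simp [LinearMap.toSeminormFamily_apply, _root_.map_smul, h0, hr]
    have := hUsub hmem
    change L ((t:ℝ) • (Q : WeakDual ℝ E)) ∈ Metric.ball (0:ℝ) 1 at this
    simp only [Set.mem_preimage, Metric.mem_ball, dist_zero_right, _root_.map_smul, smul_eq_mul,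
      Real.norm_eq_abs, abs_mul, Nat.abs_cast] at this
    rw [show L ((t:ℝ) • Q) = (t:ℝ) * L Q from L.map_smul (t:ℝ) Q, abs_mul, Nat.abs_cast] at this
    have ht' : (1:ℝ) < t * |L Q| := by
      rw [div_lt_iff₀ habs] at ht
      linarith
    linarith
  have hspan := mem_span_of_iInf_ker_le_ker (L := fun e : (s : Set E) => B.flip e) hker
  obtain ⟨c, hc⟩ := (Submodule.mem_span_range_iff_exists_fun ℝ).1 hspan
  refine ⟨∑ e : (s : Set E), c e • (e : E), fun Q => ?_⟩
  have := LinearMap.congr_fun hc Q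
  simp only [LinearMap.coe_sum, Finset.sum_apply, LinearMap.smul_apply, LinearMap.flip_apply,
    smul_eq_mul, ContinuousLinearMap.coe_coe] at this
  have h2 : Q (∑ e : (s : Set E), c e • (e : E)) = ∑ e : (s : Set E), c e * Q e := by
    rw [map_sum]
    simp [smul_eq_mul]
  rw [h2]
  exact this.symm.trans ((Finset.sum_apply _ _ _).trans rfl)

instance weakDualLocallyConvex {E : Type*} [AddCommGroup E] [Module ℝ E] [TopologicalSpace E] :
    LocallyConvexSpace ℝ (WeakDual ℝ E) :=
  WeakBilin.locallyConvexSpace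

lemma wd_add_apply {E : Type*} [AddCommGroup E] [Module ℝ E] [TopologicalSpace E]
    (Q R : WeakDual ℝ E) (φ : E) : (Q + R) φ = Q φ + R φ := rfl

lemma wd_smul_apply {E : Type*} [AddCommGroup E] [Module ℝ E] [TopologicalSpace E]
    (a : ℝ) (Q : WeakDual ℝ E) (φ : E) : (a • Q) φ = a * Q φ := rfl

variable {K : Type*} [TopologicalSpace K] [CompactSpace K]
variable (Φ : Submodule ℝ C(K, ℝ)) (h1 : ContinuousMap.const K (1 : ℝ) ∈ Φ)

noncomputable instance phiDualSNAG : SeminormedAddCommGroup (StrongDual ℝ ↥Φ) :=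
  @ContinuousLinearMap.toSeminormedAddCommGroup ℝ ℝ ↥Φ ℝ _ _ _ _ _ _ _ _

noncomputable instance phiDualNS : NormedSpace ℝ (StrongDual ℝ ↥Φ) :=
  @ContinuousLinearMap.toNormedSpace ℝ ℝ ↥Φ ℝ _ _ _ _ _ _ _ _ ℝ _ _ _

lemma deltaPhi_apply' (x : K) (φ : ↥Φ) : deltaPhi Φ x φ = (φ : C(K, ℝ)) x := rfl

lemma norm_const_one_le' : ‖(⟨ContinuousMap.const K (1 : ℝ), h1⟩ : ↥Φ)‖ ≤ 1 := by
  show ‖ContinuousMap.const K (1 : ℝ)‖ ≤ 1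
  exact (ContinuousMap.norm_le _ zero_le_one).2 fun x => by simp

lemma one_le_norm_of' (Q : WeakDual ℝ ↥Φ)
    (hQ : Q ⟨ContinuousMap.const K (1 : ℝ), h1⟩ = 1) :
    1 ≤ ‖WeakDual.toStrongDual Q‖ := by
  have h := @ContinuousLinearMap.le_opNorm ℝ ℝ ↥Φ ℝ _ _ _ _ _ _ _ _ (WeakDual.toStrongDual Q) (⟨ContinuousMap.const K (1 : ℝ), h1⟩ : ↥Φ)
  have h' : ‖WeakDual.toStrongDual Q‖ * ‖(⟨ContinuousMap.const K (1 : ℝ), h1⟩ : ↥Φ)‖ ≤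
      ‖WeakDual.toStrongDual Q‖ :=
    mul_le_of_le_one_right (norm_nonneg _) (norm_const_one_le' Φ h1)
  have hQQ : ‖WeakDual.toStrongDual Q (⟨ContinuousMap.const K (1 : ℝ), h1⟩ : ↥Φ)‖ = 1 := by
    show ‖Q (⟨ContinuousMap.const K (1 : ℝ), h1⟩ : ↥Φ)‖ = 1
    rw [Real.norm_eq_abs, hQ, abs_one]
  rw [hQQ] at h
  exact le_trans h h'

lemma abs_apply_le_of_mem_KPhi' {Q : WeakDual ℝ ↥Φ} (hQ : Q ∈ KPhi Φ h1) (φ : ↥Φ) :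
    |Q φ| ≤ ‖(φ : C(K, ℝ))‖ := by
  have h := @ContinuousLinearMap.le_opNorm ℝ ℝ ↥Φ ℝ _ _ _ _ _ _ _ _ (WeakDual.toStrongDual Q) φ
  have heq : ‖WeakDual.toStrongDual Q φ‖ = |Q φ| := rfl
  rw [heq] at h
  have hn : ‖WeakDual.toStrongDual Q‖ = 1 := hQ.1
  have h3 : |Q φ| ≤ ‖WeakDual.toStrongDual Q‖ * ‖φ‖ := h
  rw [hn, one_mul] at h3
  exact h3

lemma deltaPhi_mem_KPhi' (x : K) : deltaPhi Φ x ∈ KPhi Φ h1 := by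
  have heval : deltaPhi Φ x ⟨ContinuousMap.const K (1 : ℝ), h1⟩ = 1 := rfl
  refine ⟨le_antisymm ?_ (one_le_norm_of' Φ h1 _ heval), heval⟩
  refine ContinuousLinearMap.opNorm_le_bound _ zero_le_one fun φ => ?_
  rw [one_mul]
  exact (φ : C(K, ℝ)).norm_coe_le_norm x

lemma KPhi_convex' : Convex ℝ (KPhi Φ h1) := by
  intro Q hQ R hR a b ha hb hab
  have heval : (a • Q + b • R) ⟨ContinuousMap.const K (1 : ℝ), h1⟩ = 1 := by
    rw [wd_add_apply, wd_smul_apply, wd_smul_apply, hQ.2, hR.2]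
    linarith
  refine ⟨le_antisymm ?_ (one_le_norm_of' Φ h1 _ heval), heval⟩
  have :  WeakDual.toStrongDual (a • Q + b • R) =
      a • WeakDual.toStrongDual Q + b • WeakDual.toStrongDual R := rfl
  rw [this]
  calc ‖a • WeakDual.toStrongDual Q + b • WeakDual.toStrongDual R‖
      ≤ ‖a • WeakDual.toStrongDual Q‖ + ‖b • WeakDual.toStrongDual R‖ := norm_add_le _ _
    _ = |a| * ‖WeakDual.toStrongDual Q‖ + |b| * ‖WeakDual.toStrongDual R‖ := by
        rw [norm_smul, norm_smul]; simp [Real.norm_eq_abs]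
    _ = 1 := by rw [hQ.1, hR.1, abs_of_nonneg ha, abs_of_nonneg hb]; linarith

lemma KPhi_isClosed' : IsClosed (KPhi Φ h1) := by
  have : KPhi Φ h1 = (WeakDual.toStrongDual ⁻¹' Metric.closedBall 0 1) ∩
      {Q : WeakDual ℝ ↥Φ | Q ⟨ContinuousMap.const K (1 : ℝ), h1⟩ = 1} := by
    ext Q
    constructor
    · intro hQ
      exact ⟨Set.mem_preimage.2 (mem_closedBall_zero_iff.2 (le_of_eq hQ.1)), hQ.2⟩
    · rintro ⟨hQ1, hQ2⟩
      have hQ1' : ‖WeakDual.toStrongDual Q‖ ≤ 1 :=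
        mem_closedBall_zero_iff.1 (Set.mem_preimage.1 hQ1)
      exact ⟨le_antisymm hQ1' (one_le_norm_of' Φ h1 _ hQ2), hQ2⟩
  rw [this]
  exact (@WeakDual.isClosed_closedBall ℝ ↥Φ _ _ _ _ _).inter
    (isClosed_eq (WeakDual.eval_continuous _) continuous_const)

lemma deltaPhi_injective' (hsep : ∀ x y : K, x ≠ y → ∃ φ ∈ Φ, φ x ≠ φ y) :
    Function.Injective (deltaPhi Φ) := by
  intro x y h
  by_contra hxy
  obtain ⟨φ, hφ, hne⟩ := hsep x y hxy
  exact hne (congrArg (fun Q : WeakDual ℝ ↥Φ => Q ⟨φ, hφ⟩) h)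

end Aux

set_option maxHeartbeats 1000000 in
/-- For a closed `C ⊆ K` the following are equivalent: (i) `C` is a
convex-trace set w.r.t. `Φ`; (ii) `C` is an intersection of sublevel sets
`{x : φ_i(x) ≤ λ_i}` with `{φ_i} ⊆ Φ` uniformly bounded and `{λ_i}` bounded;
(iii) `C = {x : f(x) ≤ 0}` for some lower semicontinuous convex-trace function `f`. -/
theorem stmt6 {K : Type*} [TopologicalSpace K] [CompactSpace K] [T2Space K]
    (Φ : Submodule ℝ C(K, ℝ)) (hΦclosed : IsClosed (Φ : Set C(K, ℝ)))
    (hsep : ∀ x y : K, x ≠ y → ∃ φ ∈ Φ, φ x ≠ φ y)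
    (hconst : ∀ c : ℝ, ContinuousMap.const K c ∈ Φ)
    (C : Set K) (hC : IsClosed C) :
    List.TFAE
      [TraceConvexSet Φ (hconst 1) C,
       ∃ S : Set (↥Φ × ℝ),
         (∃ M : ℝ, ∀ p ∈ S, ‖(p.1 : C(K, ℝ))‖ ≤ M) ∧
         (∃ M' : ℝ, ∀ p ∈ S, |p.2| ≤ M') ∧
         C = {x : K | ∀ p ∈ S, (p.1 : C(K, ℝ)) x ≤ p.2},
       ∃ f : K → ℝ, LscConvexTrace Φ (hconst 1) f ∧ C = {x : K | f x ≤ 0}] := by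
  set h1 := hconst 1
  tfae_have 1 → 2 := by
    rintro ⟨-, Ch, hChsub, hChcl, hChconv, him⟩
    refine ⟨{p : ↥Φ × ℝ | ‖(p.1 : C(K, ℝ))‖ ≤ 1 ∧ |p.2| ≤ 1 ∧
        ∀ y ∈ C, (p.1 : C(K, ℝ)) y ≤ p.2}, ⟨1, fun p hp => hp.1⟩, ⟨1, fun p hp => hp.2.1⟩, ?_⟩
    ext x
    simp only [Set.mem_setOf_eq]
    constructor
    · exact fun hx p hp => hp.2.2 x hx
    · intro hx
      by_contra hxC
      have hδx : deltaPhi Φ x ∉ Ch := by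
        intro hmem
        have : deltaPhi Φ x ∈ deltaPhi Φ '' C := by
          rw [him]
          exact ⟨⟨x, Set.mem_univ x, rfl⟩, hmem⟩
        obtain ⟨c, hcC, hec⟩ := this
        exact hxC (deltaPhi_injective' Φ hsep hec ▸ hcC)
      by_cases hne : Ch.Nonempty
      · obtain ⟨f, u, hfu, hux⟩ := geometric_hahn_banach_closed_point hChconv hChcl hδx
        obtain ⟨φ₀, hφ₀⟩ := weakDual_dual_eval f
        set n := ‖(φ₀ : C(K, ℝ))‖ with hn_def
        obtain ⟨Q0, hQ0⟩ := hne
        have hQ0K := hChsub hQ0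
        have hb1 : Q0 φ₀ < u := by rw [← hφ₀]; exact hfu Q0 hQ0
        have hb2 : u < (φ₀ : C(K, ℝ)) x := by
          have := hux
          rw [hφ₀ (deltaPhi Φ x)] at this
          exact this
        have habs : |Q0 φ₀| ≤ n := abs_apply_le_of_mem_KPhi' Φ h1 hQ0K φ₀
        have hux' : (φ₀ : C(K, ℝ)) x ≤ n := by
          have := (φ₀ : C(K, ℝ)).norm_coe_le_norm x
          exact le_trans (le_abs_self _) this
        have hn : 0 < n := by
          rcases abs_le.1 habs with ⟨hl, -⟩
          by_contra hcon
          push_neg at hcon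
          linarith
        have hmemS : (n⁻¹ • φ₀, n⁻¹ * u) ∈ {p : ↥Φ × ℝ | ‖(p.1 : C(K, ℝ))‖ ≤ 1 ∧ |p.2| ≤ 1 ∧
            ∀ y ∈ C, (p.1 : C(K, ℝ)) y ≤ p.2} := by
          refine ⟨?_, ?_, ?_⟩
          · have hco : ((n⁻¹ • φ₀ : ↥Φ) : C(K, ℝ)) = n⁻¹ • (φ₀ : C(K, ℝ)) := rfl
            rw [hco]
            have hns := norm_smul n⁻¹ ((φ₀ : C(K, ℝ)))
            rw [hns]
            simp only [norm_inv, Real.norm_eq_abs, abs_of_pos hn, ← hn_def]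
            rw [inv_mul_cancel₀ (ne_of_gt hn)]
          · have hl : -n ≤ u := by
              have := (abs_le.1 habs).1
              linarith
            have hu : u ≤ n := by linarith
            have habs_u : |u| ≤ n := abs_le.2 ⟨hl, hu⟩
            rw [abs_mul, abs_of_pos (inv_pos.2 hn)]
            calc n⁻¹ * |u| ≤ n⁻¹ * n := by gcongr
              _ = 1 := inv_mul_cancel₀ (ne_of_gt hn)
          · intro y hy
            have hδy : deltaPhi Φ y ∈ Ch := by
              have : deltaPhi Φ y ∈ deltaPhi Φ '' C := ⟨y, hy, rfl⟩
              rw [him] at this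
              exact this.2
            have hyu : (φ₀ : C(K, ℝ)) y < u := by
              have := hfu _ hδy
              rw [hφ₀ (deltaPhi Φ y)] at this
              exact this
            have hc : ((n⁻¹ • φ₀ : ↥Φ) : C(K, ℝ)) y = n⁻¹ * (φ₀ : C(K, ℝ)) y := rfl
            rw [hc]
            exact mul_le_mul_of_nonneg_left (le_of_lt hyu) (le_of_lt (inv_pos.2 hn))
        have hxmem := hx _ hmemS
        simp only at hxmem
        have hc : ((n⁻¹ • φ₀ : ↥Φ) : C(K, ℝ)) x = n⁻¹ * (φ₀ : C(K, ℝ)) x := rfl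
        rw [hc] at hxmem
        have := mul_lt_mul_of_pos_left hb2 (inv_pos.2 hn)
        linarith
      · rw [Set.not_nonempty_iff_eq_empty] at hne
        have hCempty : C = ∅ := by
          rw [hne, Set.inter_empty] at him
          exact Set.image_eq_empty.1 him
        have := hx ((0 : ↥Φ), -1) ⟨by simp, by norm_num, fun y hy => by
          rw [hCempty] at hy; exact absurd hy (Set.notMem_empty y)⟩
        simp only [Submodule.coe_zero, ContinuousMap.zero_apply] at this
        linarith
  tfae_have 2 → 3 := by
    rintro ⟨S, ⟨M, hM⟩, ⟨M', hM'⟩, hCeq⟩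
    by_cases hS : S.Nonempty
    · set F : WeakDual ℝ ↥Φ → ℝ := fun Q => sSup ((fun p : ↥Φ × ℝ => Q p.1 - p.2) '' S) with hF
      have hne' : ∀ Q : WeakDual ℝ ↥Φ, ((fun p : ↥Φ × ℝ => Q p.1 - p.2) '' S).Nonempty :=
        fun Q => hS.image _
      have hbdd : ∀ Q ∈ KPhi Φ h1, BddAbove ((fun p : ↥Φ × ℝ => Q p.1 - p.2) '' S) := by
        intro Q hQ
        refine ⟨M + M', ?_⟩
        rintro z ⟨p, hp, rfl⟩
        show Q p.1 - p.2 ≤ M + M'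
        have h1' := (abs_le.1 (abs_apply_le_of_mem_KPhi' Φ h1 hQ p.1)).2
        have h2' := (abs_le.1 (hM' p hp)).1
        have h3' := hM p hp
        linarith
      have hle : ∀ Q ∈ KPhi Φ h1, ∀ p ∈ S, Q p.1 - p.2 ≤ F Q :=
        fun Q hQ p hp => le_csSup (hbdd Q hQ) ⟨p, hp, rfl⟩
      refine ⟨fun x => F (deltaPhi Φ x), ⟨F, ?_, ?_, fun x => rfl⟩, ?_⟩
      · refine ⟨KPhi_convex' Φ h1, ?_⟩
        intro Q hQ R hR a b ha hb hab
        refine csSup_le (hne' _) ?_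
        rintro z ⟨p, hp, rfl⟩
        show (a • Q + b • R) p.1 - p.2 ≤ a • F Q + b • F R
        have hsplit : a * p.2 + b * p.2 = p.2 := by
          rw [← add_mul, hab, one_mul]
        have heq : (a • Q + b • R) p.1 - p.2 = a * (Q p.1 - p.2) + b * (R p.1 - p.2) := by
          rw [wd_add_apply, wd_smul_apply, wd_smul_apply]
          ring_nf
          linarith
        rw [heq]
        have hq := hle Q hQ p hp
        have hr := hle R hR p hp
        have := mul_le_mul_of_nonneg_left hq ha
        have := mul_le_mul_of_nonneg_left hr hb
        simp only [smul_eq_mul]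
        linarith
      · intro Q hQ y hy
        obtain ⟨z, ⟨p, hpS, rfl⟩, hz⟩ := exists_lt_of_lt_csSup (hne' Q) hy
        have hcont : Continuous fun R : WeakDual ℝ ↥Φ => R p.1 - p.2 :=
          (WeakDual.eval_continuous p.1).sub continuous_const
        have hev : ∀ᶠ R in nhds Q, y < R p.1 - p.2 :=
          (hcont.tendsto Q).eventually (eventually_gt_nhds hz)
        filter_upwards [eventually_nhdsWithin_of_eventually_nhds hev,
          self_mem_nhdsWithin] with R hR1 hR2
        exact lt_of_lt_of_le hR1 (hle R hR2 p hpS)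
      · rw [hCeq]
        ext x
        simp only [Set.mem_setOf_eq]
        constructor
        · intro h
          refine csSup_le (hne' _) ?_
          rintro z ⟨p, hp, rfl⟩
          show deltaPhi Φ x p.1 - p.2 ≤ 0
          have := h p hp
          have hd : deltaPhi Φ x p.1 = (p.1 : C(K, ℝ)) x := rfl
          rw [hd]
          linarith
        · intro h p hp
          have := hle (deltaPhi Φ x) (deltaPhi_mem_KPhi' Φ h1 x) p hp
          have hd : deltaPhi Φ x p.1 = (p.1 : C(K, ℝ)) x := rfl
          rw [hd] at this
          linarith
    · rw [Set.not_nonempty_iff_eq_empty] at hS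
      subst hS
      refine ⟨fun _ => -1, ⟨fun _ => -1, convexOn_const _ (KPhi_convex' Φ h1),
        continuous_const.lowerSemicontinuous.lowerSemicontinuousOn _, fun _ => rfl⟩, ?_⟩
      rw [hCeq]
      ext x
      simp
  tfae_have 3 → 1 := by
    rintro ⟨f, ⟨F, hFconv, hFlsc, hfF⟩, hCeq⟩
    refine ⟨hC, {Q ∈ KPhi Φ h1 | F Q ≤ 0}, fun Q hQ => hQ.1, ?_, hFconv.convex_le 0, ?_⟩
    · rw [← isOpen_compl_iff, isOpen_iff_mem_nhds]
      intro Q hQ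
      by_cases hQK : Q ∈ KPhi Φ h1
      · have hFQ : 0 < F Q := by
          by_contra hcon
          push_neg at hcon
          exact hQ ⟨hQK, hcon⟩
        have := hFlsc Q hQK 0 hFQ
        rw [eventually_nhdsWithin_iff] at this
        refine Filter.mem_of_superset this ?_
        intro R hR hRmem
        exact absurd (hR hRmem.1) (not_lt.2 hRmem.2)
      · have : IsOpen (KPhi Φ h1)ᶜ := (KPhi_isClosed' Φ h1).isOpen_compl
        refine Filter.mem_of_superset (this.mem_nhds hQK) ?_
        intro R hR hRmem
        exact hR hRmem.1
    · ext z
      constructor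
      · rintro ⟨x, hxC, rfl⟩
        have hx0 : f x ≤ 0 := by rw [hCeq] at hxC; exact hxC
        rw [hfF x] at hx0
        exact ⟨⟨x, Set.mem_univ x, rfl⟩, deltaPhi_mem_KPhi' Φ h1 x, hx0⟩
      · rintro ⟨⟨x, -, rfl⟩, hmem⟩
        refine ⟨x, ?_, rfl⟩
        rw [hCeq]
        show f x ≤ 0
        rw [hfF x]
        exact hmem.2
  tfae_finish
end

section
/- Let Φ be a real Banach space and S ⊆ Φ* be a nonempty weak*-compact subset that is metrizable in the weak* topology. Then S has a weak*-exposed point, and consequently the set of extreme points of S is nonempty. -/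
open Set

open TopologicalSpace in
private theorem stmt14_sep {Φ : Type*} [NormedAddCommGroup Φ] [NormedSpace ℝ Φ]
    (S : Set (WeakDual ℝ Φ)) (hcomp : IsCompact S)
    (hmetr : MetrizableSpace ↥S) :
    ∃ y : ℕ → Φ, (∀ n, ‖y n‖ ≤ 1) ∧ (∀ n, ∀ p ∈ S, |p (y n)| ≤ 1) ∧
      (∀ p ∈ S, ∀ q ∈ S, (∀ n, p (y n) = q (y n)) → p = q) := by
  haveI : CompactSpace ↥S := isCompact_iff_compactSpace.mp hcomp
  haveI : SecondCountableTopology ↥S := by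
    letI := metrizableSpaceMetric ↥S
    infer_instance
  haveI : SecondCountableTopology C(↥S, ℝ) := UniformSpace.secondCountable_of_separable _
  set e : Φ → C(↥S, ℝ) := fun x => ⟨fun p => (p : WeakDual ℝ Φ) x,
    (WeakDual.eval_continuous x).comp continuous_subtype_val⟩ with he
  haveI : SeparableSpace ↥(range e) := inferInstance
  obtain ⟨D, hDc, hDd⟩ := exists_countable_dense ↥(range e)
  have hsub : range e ⊆ closure ((↑) '' D) := Subtype.dense_iff.mp hDd
  have himc : ((↑) '' D : Set C(↥S, ℝ)).Countable := hDc.image _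
  have hnonempty : ((↑) '' D : Set C(↥S, ℝ)).Nonempty := by
    rcases Set.eq_empty_or_nonempty ((↑) '' D : Set C(↥S, ℝ)) with h | h
    · exfalso
      have := hsub (mem_range_self 0)
      rw [h, closure_empty] at this
      exact this
    · exact h
  obtain ⟨f, hf⟩ := Set.Countable.exists_eq_range himc hnonempty
  have hfr : ∀ n, ∃ x : Φ, e x = f n := by
    intro n
    have : f n ∈ ((↑) '' D : Set C(↥S, ℝ)) := hf ▸ mem_range_self n
    obtain ⟨⟨g, hg⟩, _, rfl⟩ := this
    exact hg
  choose x' hx' using hfr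
  set c : ℕ → ℝ := fun n => max (max ‖x' n‖ ‖e (x' n)‖) 1 with hc
  have hc1 : ∀ n, (1:ℝ) ≤ c n := fun n => le_max_right _ _
  have hcpos : ∀ n, (0:ℝ) < c n := fun n => lt_of_lt_of_le one_pos (hc1 n)
  refine ⟨fun n => (c n)⁻¹ • x' n, ?_, ?_, ?_⟩
  · intro n
    rw [norm_smul, norm_inv, Real.norm_eq_abs, abs_of_pos (hcpos n)]
    rw [inv_mul_le_iff₀ (hcpos n), mul_one]
    exact le_trans (le_max_left _ _) (le_max_left _ _)
  · intro n p hp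
    rw [map_smul, smul_eq_mul, abs_mul, abs_inv, abs_of_pos (hcpos n)]
    rw [inv_mul_le_iff₀ (hcpos n), mul_one]
    have h1 : |p (x' n)| = |(e (x' n)) ⟨p, hp⟩| := rfl
    rw [h1]
    calc |(e (x' n)) ⟨p, hp⟩| ≤ ‖e (x' n)‖ := (e (x' n)).norm_coe_le_norm _
    _ ≤ c n := le_trans (le_max_right _ _) (le_max_left _ _)
  · intro p hp q hq hagree
    have hagree' : ∀ n, p (x' n) = q (x' n) := by
      intro n
      have := hagree n
      rw [map_smul, map_smul, smul_eq_mul, smul_eq_mul] at this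
      exact mul_left_cancel₀ (inv_ne_zero (hcpos n).ne') this
    have hZ : IsClosed {g : C(↥S, ℝ) | g ⟨p, hp⟩ = g ⟨q, hq⟩} :=
      isClosed_eq (ContinuousEvalConst.continuous_eval_const _)
        (ContinuousEvalConst.continuous_eval_const _)
    have hTZ : ((↑) '' D : Set C(↥S, ℝ)) ⊆ {g : C(↥S, ℝ) | g ⟨p, hp⟩ = g ⟨q, hq⟩} := by
      rw [hf]
      rintro _ ⟨n, rfl⟩
      show (f n) ⟨p, hp⟩ = (f n) ⟨q, hq⟩
      rw [← hx' n]
      exact hagree' n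
    have hall : ∀ x : Φ, p x = q x := by
      intro x
      have : e x ∈ {g : C(↥S, ℝ) | g ⟨p, hp⟩ = g ⟨q, hq⟩} :=
        closure_minimal hTZ hZ (hsub (mem_range_self x))
      exact this
    exact ContinuousLinearMap.ext hall

private theorem stmt14_exposed {Φ : Type*} [NormedAddCommGroup Φ] [NormedSpace ℝ Φ]
    [CompleteSpace Φ]
    (S : Set (WeakDual ℝ Φ)) (hne : S.Nonempty) (hcomp : IsCompact S)
    (y : ℕ → Φ) (hy1 : ∀ n, ‖y n‖ ≤ 1) (hy2 : ∀ n, ∀ p ∈ S, |p (y n)| ≤ 1)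
    (hy3 : ∀ p ∈ S, ∀ q ∈ S, (∀ n, p (y n) = q (y n)) → p = q) :
    ∃ p ∈ S, ∃ x : Φ, ∀ q ∈ S, q ≠ p → q x < p x := by
  set w : ℕ → ℝ := fun n => (1/2 : ℝ)^n with hw
  have hwpos : ∀ n, 0 < w n := fun n => pow_pos (by norm_num) n
  have hwsum : Summable w := summable_geometric_of_lt_one (by norm_num) (by norm_num)
  have hbd : ∀ (C : ℝ), 0 ≤ C → ∀ (u : ℕ → ℝ), (∀ n, |u n| ≤ C) →
      Summable (fun n => w n * u n) := by
    intro C hC u hu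
    refine Summable.of_norm_bounded (hwsum.mul_left C) fun n => ?_
    rw [Real.norm_eq_abs, abs_mul, abs_of_pos (hwpos n)]
    calc w n * |u n| ≤ w n * C := by
          exact mul_le_mul_of_nonneg_left (hu n) (hwpos n).le
      _ = C * w n := mul_comm _ _
  set g : WeakDual ℝ Φ → ℝ := fun p => ∑' n, w n * (p (y n))^2 with hg
  have habs1 : ∀ p ∈ S, ∀ n, |(p (y n))^2| ≤ 1 := by
    intro p hp n
    rw [abs_pow]
    exact pow_le_one₀ (abs_nonneg _) (hy2 n p hp)
  have hgs : ∀ p ∈ S, Summable fun n => w n * (p (y n))^2 := fun p hp =>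
    hbd 1 one_pos.le _ (habs1 p hp)
  have hgc : ContinuousOn g S := by
    rw [continuousOn_iff_continuous_restrict]
    refine continuous_tsum (fun n => ?_) hwsum (fun n p => ?_)
    · have hev : Continuous fun p : ↥S => (p : WeakDual ℝ Φ) (y n) :=
        (WeakDual.eval_continuous (y n)).comp continuous_subtype_val
      exact continuous_const.mul (hev.pow 2)
    · rw [Real.norm_eq_abs, abs_mul, abs_of_pos (hwpos n)]
      calc w n * |((p : WeakDual ℝ Φ) (y n))^2| ≤ w n * 1 :=
            mul_le_mul_of_nonneg_left (habs1 p p.2 n) (hwpos n).le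
        _ = w n := mul_one _
  obtain ⟨p, hpS, hpmax⟩ := hcomp.exists_isMaxOn hne hgc
  have hxs : Summable fun n => (w n * p (y n)) • y n := by
    refine Summable.of_norm_bounded hwsum fun n => ?_
    rw [norm_smul, Real.norm_eq_abs, abs_mul, abs_of_pos (hwpos n)]
    calc w n * |p (y n)| * ‖y n‖ ≤ w n * 1 * 1 := by
          gcongr
          · exact hy2 n p hpS
          · exact hy1 n
      _ = w n := by ring
  set x : Φ := ∑' n, (w n * p (y n)) • y n with hx
  refine ⟨p, hpS, x, ?_⟩
  intro q hqS hqp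
  have happ : ∀ r : WeakDual ℝ Φ, r x = ∑' n, w n * p (y n) * r (y n) := by
    intro r
    have : r x = ∑' n, r ((w n * p (y n)) • y n) :=
      ContinuousLinearMap.map_tsum (r : Φ →L[ℝ] ℝ) hxs
    rw [this]
    congr 1
    funext n
    rw [map_smul, smul_eq_mul]
  have hS1 : Summable fun n => w n * (p (y n) * q (y n)) :=
    hbd 1 one_pos.le _ (by
      intro n
      rw [abs_mul]
      have h1 := hy2 n p hpS
      have h2 := hy2 n q hqS
      nlinarith [abs_nonneg (p (y n)), abs_nonneg (q (y n))])
  have hS3 : Summable fun n => w n * (q (y n) - p (y n))^2 :=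
    hbd 4 (by norm_num) _ (by
      intro n
      rw [abs_pow]
      have h1 := hy2 n p hpS
      have h2 := hy2 n q hqS
      have : |q (y n) - p (y n)| ≤ 2 := by
        calc |q (y n) - p (y n)| ≤ |q (y n)| + |p (y n)| := abs_sub _ _
          _ ≤ 2 := by linarith
      nlinarith [abs_nonneg (q (y n) - p (y n))])
  have hA : 0 < ∑' n, w n * (q (y n) - p (y n))^2 := by
    have hexists : ∃ n, q (y n) ≠ p (y n) := by
      by_contra h
      push_neg at h
      exact hqp (hy3 q hqS p hpS h)
    obtain ⟨n, hn⟩ := hexists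
    refine Summable.tsum_pos hS3 (fun i => ?_) n ?_
    · positivity
    · have h3 : q (y n) - p (y n) ≠ 0 := sub_ne_zero.mpr hn
      have h4 : 0 < (q (y n) - p (y n))^2 :=
        lt_of_le_of_ne (sq_nonneg _) (Ne.symm (pow_ne_zero 2 h3))
      exact mul_pos (hwpos n) h4
  have hident : ∀ n, w n * (q (y n))^2 =
      w n * (p (y n))^2 + 2 * (w n * (p (y n) * q (y n)) - w n * (p (y n))^2)
        + w n * (q (y n) - p (y n))^2 := by
    intro n; ring
  have hgq : g q ≤ g p := hpmax hqS
  have hsum_p : Summable fun n => w n * (p (y n))^2 := hgs p hpS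
  have hgq_eq : g q = g p + 2 * ((∑' n, w n * (p (y n) * q (y n))) - g p)
      + ∑' n, w n * (q (y n) - p (y n))^2 := by
    rw [hg]
    simp only
    calc (∑' n, w n * (q (y n))^2)
        = ∑' n, (w n * (p (y n))^2 + 2 * (w n * (p (y n) * q (y n)) - w n * (p (y n))^2)
          + w n * (q (y n) - p (y n))^2) := by
          exact tsum_congr hident
      _ = (∑' n, (w n * (p (y n))^2 + 2 * (w n * (p (y n) * q (y n)) - w n * (p (y n))^2)))
          + ∑' n, w n * (q (y n) - p (y n))^2 := by
          refine Summable.tsum_add ?_ hS3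
          exact hsum_p.add (((hS1.sub hsum_p)).mul_left 2)
      _ = ((∑' n, w n * (p (y n))^2)
          + ∑' n, 2 * (w n * (p (y n) * q (y n)) - w n * (p (y n))^2))
          + ∑' n, w n * (q (y n) - p (y n))^2 := by
          rw [Summable.tsum_add hsum_p (((hS1.sub hsum_p)).mul_left 2)]
      _ = _ := by
          rw [tsum_mul_left, Summable.tsum_sub hS1 hsum_p]
  have hqx : q x = ∑' n, w n * (p (y n) * q (y n)) := by
    rw [happ q]; congr 1; funext n; ring
  have hpx : p x = g p := by
    rw [happ p, hg]; congr 1; funext n; ring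
  rw [hqx, hpx]
  nlinarith [hgq, hA, hgq_eq]

/-- Let `Φ` be a real Banach space and `S ⊆ Φ*` a nonempty weak*-compact
subset that is metrizable in the weak* topology. Then `S` has a weak*-exposed point, and
consequently the set of extreme points of `S` is nonempty. -/
theorem stmt14 {Φ : Type*} [NormedAddCommGroup Φ] [NormedSpace ℝ Φ] [CompleteSpace Φ]
    (S : Set (WeakDual ℝ Φ)) (hne : S.Nonempty) (hcomp : IsCompact S)
    (hmetr : TopologicalSpace.MetrizableSpace ↥S) :
    (∃ p ∈ S, ∃ x : Φ, ∀ q ∈ S, q ≠ p → q x < p x) ∧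
    (Set.extremePoints ℝ S).Nonempty := by
  obtain ⟨y, hy1, hy2, hy3⟩ := stmt14_sep S hcomp hmetr
  obtain ⟨p, hpS, x, hexp⟩ := stmt14_exposed S hne hcomp y hy1 hy2 hy3
  refine ⟨⟨p, hpS, x, hexp⟩, p, ?_⟩
  rw [mem_extremePoints]
  refine ⟨hpS, fun p₁ hp₁ p₂ hp₂ hseg => ?_⟩
  have hle : ∀ r ∈ S, r x ≤ p x := by
    intro r hr
    rcases eq_or_ne r p with rfl | hrp
    · exact le_refl _
    · exact (hexp r hr hrp).le
  obtain ⟨a, b, ha, hb, hab, habp⟩ := hseg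
  have happ : a * p₁ x + b * p₂ x = p x := by
    rw [← habp]
    rfl
  have key : ∀ r₁ ∈ S, ∀ r₂ ∈ S, ∀ a b : ℝ, 0 < a → 0 < b → a + b = 1 →
      a * r₁ x + b * r₂ x = p x → r₁ = p := by
    intro r₁ hr₁ r₂ hr₂ a b ha hb hab heq
    by_contra hne₁
    have h1 : r₁ x < p x := hexp r₁ hr₁ hne₁
    have h2 : r₂ x ≤ p x := hle r₂ hr₂
    have hcontr : p x < p x := by
      calc p x = a * r₁ x + b * r₂ x := heq.symm
        _ < a * p x + b * p x :=
            add_lt_add_of_lt_of_le (mul_lt_mul_of_pos_left h1 ha)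
              (mul_le_mul_of_nonneg_left h2 hb.le)
        _ = p x := by rw [← add_mul, hab, one_mul]
    exact lt_irrefl _ hcontr
  refine ⟨key p₁ hp₁ p₂ hp₂ a b ha hb hab happ, key p₂ hp₂ p₁ hp₁ b a hb ha ?_ ?_⟩
  · linarith
  · linarith [happ]
end

section
/- Let Φ be a real Banach space and C ⊆ Φ* a nonempty convex weak*-compact set that is metrizable in the weak* topology. Let {F_i}_{i∈I} be a nonempty family of real-valued weak*-upper semicontinuous convex functions on C whose sets of maximizers have nonempty intersection, i.e. C_max(I) := ∩_{i∈I} argmax_C F_i ≠ ∅. Then C_max(I) has a weak*-exposed point, every extreme point of C_max(I) is an extreme point of C, and in particular there exists an extreme point p̄ of C with F_i(p̄) = max_{p∈C} F_i(p) for all i ∈ I. -/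
open Set

/-- The argmax set of an usc function on a compact set is closed. -/
lemma stmt15_aux_closed {Φ : Type*} [NormedAddCommGroup Φ] [NormedSpace ℝ Φ]
    (C : Set (WeakDual ℝ Φ)) (hCcomp : IsCompact C)
    (G : WeakDual ℝ Φ → ℝ) (hGusc : UpperSemicontinuousOn G C)
    (p₀ : WeakDual ℝ Φ) (hp₀ : p₀ ∈ C ∧ IsMaxOn G C p₀) :
    IsClosed {p ∈ C | IsMaxOn G C p} := by
  have hset : {p ∈ C | IsMaxOn G C p} = {p ∈ C | G p₀ ≤ G p} := by
    ext p
    constructor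
    · rintro ⟨hpC, hpm⟩
      exact ⟨hpC, hpm hp₀.1⟩
    · rintro ⟨hpC, hpm⟩
      exact ⟨hpC, fun q hq => le_trans (hp₀.2 hq) hpm⟩
  rw [hset]
  rw [← closure_subset_iff_isClosed]
  intro x hx'
  have hxC : x ∈ C := by
    have : closure {p ∈ C | G p₀ ≤ G p} ⊆ closure C := closure_mono (fun p hp => hp.1)
    exact hCcomp.isClosed.closure_subset (this hx')
  refine ⟨hxC, ?_⟩
  by_contra hlt
  push_neg at hlt
  have husc := hGusc x hxC (G p₀) hlt
  have hne : (nhdsWithin x {p ∈ C | G p₀ ≤ G p}).NeBot := by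
    rwa [← mem_closure_iff_nhdsWithin_neBot]
  have hmono : nhdsWithin x {p ∈ C | G p₀ ≤ G p} ≤ nhdsWithin x C :=
    nhdsWithin_mono x (fun p hp => hp.1)
  have h1 : ∀ᶠ z in nhdsWithin x {p ∈ C | G p₀ ≤ G p}, G z < G p₀ := hmono husc
  have h2 : ∀ᶠ z in nhdsWithin x {p ∈ C | G p₀ ≤ G p}, G p₀ ≤ G z := by
    filter_upwards [self_mem_nhdsWithin] with z hz using hz.2
  obtain ⟨z, hz1, hz2⟩ := (h1.and h2).exists
  exact absurd hz2 (not_le.mpr hz1)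

set_option maxHeartbeats 1000000 in
/-- **Common extreme maximizer.** Let `Φ` be a real Banach space and
`C ⊆ Φ*` a nonempty convex weak*-compact metrizable set. If a nonempty family of
real-valued weak*-usc convex functions on `C` has a common maximizer, then the set of
common maximizers has a weak*-exposed point, its extreme points are extreme points of `C`,
and in particular some extreme point of `C` maximizes all the functions simultaneously. -/
theorem stmt15 {Φ : Type*} [NormedAddCommGroup Φ] [NormedSpace ℝ Φ] [CompleteSpace Φ]
    (C : Set (WeakDual ℝ Φ)) (hCne : C.Nonempty) (hCconv : Convex ℝ C)
    (hCcomp : IsCompact C) (hmetr : TopologicalSpace.MetrizableSpace ↥C)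
    {ι : Type*} [Nonempty ι] (F : ι → WeakDual ℝ Φ → ℝ)
    (hFconv : ∀ i, ConvexOn ℝ C (F i))
    (hFusc : ∀ i, UpperSemicontinuousOn (F i) C)
    (hmax : (⋂ i, {p ∈ C | IsMaxOn (F i) C p}).Nonempty) :
    (∃ p ∈ ⋂ i, {q ∈ C | IsMaxOn (F i) C q}, ∃ x : Φ,
      ∀ q ∈ ⋂ i, {r ∈ C | IsMaxOn (F i) C r}, q ≠ p → q x < p x) ∧
    (Set.extremePoints ℝ (⋂ i, {q ∈ C | IsMaxOn (F i) C q}) ⊆ Set.extremePoints ℝ C) ∧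
    ∃ p ∈ Set.extremePoints ℝ C, ∀ i, IsMaxOn (F i) C p := by
  classical
  obtain ⟨p₀, hp₀⟩ := hmax
  set K := ⋂ i, {p ∈ C | IsMaxOn (F i) C p} with hKdef
  have hp₀K : p₀ ∈ K := hp₀
  have hmemK : ∀ p, p ∈ K ↔ ∀ i, p ∈ C ∧ IsMaxOn (F i) C p := by
    intro p; simp [hKdef, Set.mem_iInter, Set.mem_setOf_eq]
  have hKsubC : K ⊆ C := fun p hp => ((hmemK p).1 hp (Classical.arbitrary ι)).1
  have hKne : K.Nonempty := ⟨p₀, hp₀K⟩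
  -- K is compact
  have hKclosed : IsClosed K := by
    apply isClosed_iInter
    intro i
    exact stmt15_aux_closed C hCcomp (F i) (hFusc i) p₀ ((hmemK p₀).1 hp₀K i)
  have hKcomp : IsCompact K := hCcomp.of_isClosed_subset hKclosed hKsubC
  -- K is an extreme subset of C
  have hext : IsExtreme ℝ C K := by
    constructor
    · exact hKsubC
    · intro x₁ hx₁ x₂ hx₂ x hxK hxseg
      obtain ⟨a, b, ha, hb, hab, hx⟩ := hxseg
      have key : ∀ i, F i x₁ = F i x ∧ F i x₂ = F i x := by
        intro i
        obtain ⟨hxC, hxm⟩ := (hmemK x).1 hxK i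
        have h1 : F i x₁ ≤ F i x := hxm hx₁
        have h2 : F i x₂ ≤ F i x := hxm hx₂
        have hconv : F i (a • x₁ + b • x₂) ≤ a * F i x₁ + b * F i x₂ :=
          (hFconv i).2 hx₁ hx₂ ha.le hb.le hab
        rw [hx] at hconv
        have hid : a * F i x + b * F i x = F i x := by rw [← add_mul, hab, one_mul]
        constructor
        · refine le_antisymm h1 ?_
          by_contra hlt
          push_neg at hlt
          linarith [mul_lt_mul_of_pos_left hlt ha, mul_le_mul_of_nonneg_left h2 hb.le]
        · refine le_antisymm h2 ?_
          by_contra hlt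
          push_neg at hlt
          linarith [mul_lt_mul_of_pos_left hlt hb, mul_le_mul_of_nonneg_left h1 ha.le]
      · rw [hmemK]
        intro i
        exact ⟨hx₁, fun q hq => le_trans (((hmemK x).1 hxK i).2 hq) (key i).1.ge⟩
  -- Countable separating family of functionals
  letI := TopologicalSpace.metrizableSpaceMetric ↥C
  haveI : CompactSpace ↥C := isCompact_iff_compactSpace.mp hCcomp
  haveI : SecondCountableTopology ↥C := inferInstance
  have hVopen : ∀ x : Φ, IsOpen {pq : ↥C × ↥C | (pq.1 : WeakDual ℝ Φ) x ≠ (pq.2 : WeakDual ℝ Φ) x} := by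
    intro x
    apply isOpen_ne_fun
    · exact (WeakDual.eval_continuous x).comp (continuous_subtype_val.comp continuous_fst)
    · exact (WeakDual.eval_continuous x).comp (continuous_subtype_val.comp continuous_snd)
  obtain ⟨T, hTc, hTU⟩ := TopologicalSpace.isOpen_iUnion_countable
    (fun x : Φ => {pq : ↥C × ↥C | (pq.1 : WeakDual ℝ Φ) x ≠ (pq.2 : WeakDual ℝ Φ) x}) hVopen
  obtain ⟨e, he⟩ := (hTc.insert (0 : Φ)).exists_eq_range (insert_nonempty _ _)
  have hsep : ∀ p ∈ C, ∀ q ∈ C, p ≠ q → ∃ n : ℕ, p (e n) ≠ q (e n) := by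
    intro p hp q hq hpq
    have hexists : (⟨⟨p, hp⟩, ⟨q, hq⟩⟩ : ↥C × ↥C) ∈
        ⋃ x : Φ, {pq : ↥C × ↥C | (pq.1 : WeakDual ℝ Φ) x ≠ (pq.2 : WeakDual ℝ Φ) x} := by
      have : ∃ x, p x ≠ q x := by
        by_contra hc; push_neg at hc; exact hpq (DFunLike.ext _ _ hc)
      obtain ⟨x, hx⟩ := this
      exact Set.mem_iUnion.mpr ⟨x, hx⟩
    rw [← hTU] at hexists
    simp only [Set.mem_iUnion, Set.mem_setOf_eq] at hexists
    obtain ⟨x, hxT, hx⟩ := hexists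
    have hxT' : x ∈ insert (0:Φ) T := Set.mem_insert_of_mem _ hxT
    rw [he] at hxT'
    obtain ⟨n, hn⟩ := hxT'
    exact ⟨n, by rw [hn]; exact hx⟩
  -- Normalize
  set y : ℕ → Φ := fun n => ‖e n‖⁻¹ • e n with hydef
  have hynorm : ∀ n, ‖y n‖ ≤ 1 := by
    intro n
    by_cases h : e n = 0
    · simp [hydef, h]
    · rw [hydef]
      simp only [norm_smul, norm_inv, norm_norm]
      rw [inv_mul_cancel₀ (norm_ne_zero_iff.mpr h)]
  have hysep : ∀ p ∈ C, ∀ q ∈ C, p ≠ q → ∃ n : ℕ, p (y n) ≠ q (y n) := by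
    intro p hp q hq hpq
    obtain ⟨n, hn⟩ := hsep p hp q hq hpq
    refine ⟨n, ?_⟩
    have hne : e n ≠ 0 := by
      intro h; apply hn; rw [h]; simp
    have h1 : p (y n) = ‖e n‖⁻¹ * p (e n) := by rw [hydef]; exact map_smul p _ _
    have h2 : q (y n) = ‖e n‖⁻¹ * q (e n) := by rw [hydef]; exact map_smul q _ _
    rw [h1, h2]
    intro hcon
    exact hn (mul_left_cancel₀ (inv_ne_zero (norm_ne_zero_iff.mpr hne)) hcon)
  -- uniform bound on C
  have hptwise : ∀ z : Φ, ∃ M : ℝ, ∀ p : ↥C, ‖WeakDual.toStrongDual (p : WeakDual ℝ Φ) z‖ ≤ M := by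
    intro z
    obtain ⟨M, hM⟩ := hCcomp.exists_bound_of_continuousOn
      ((WeakDual.eval_continuous z).continuousOn (s := C))
    exact ⟨M, fun p => hM p p.2⟩
  obtain ⟨R₀, hR₀⟩ := banach_steinhaus (g := fun p : ↥C => WeakDual.toStrongDual (p : WeakDual ℝ Φ)) hptwise
  set R : ℝ := max R₀ 1 with hRdef
  have hR1 : (1:ℝ) ≤ R := le_max_right _ _
  have hR0 : (0:ℝ) < R := lt_of_lt_of_le one_pos hR1
  have hbound : ∀ p ∈ C, ∀ n, |p (y n)| ≤ R := by
    intro p hp n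
    have h1 : ‖WeakDual.toStrongDual p (y n)‖ ≤ ‖WeakDual.toStrongDual p‖ * ‖y n‖ :=
      (WeakDual.toStrongDual p).le_opNorm _
    have h2 : ‖WeakDual.toStrongDual p‖ ≤ R₀ := hR₀ ⟨p, hp⟩
    have h3 : ‖WeakDual.toStrongDual p‖ * ‖y n‖ ≤ R₀ * 1 := by
      apply mul_le_mul h2 (hynorm n) (norm_nonneg _) (le_trans (norm_nonneg _) h2)
    calc |p (y n)| = ‖WeakDual.toStrongDual p (y n)‖ := rfl
      _ ≤ R₀ * 1 := le_trans h1 h3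
      _ = R₀ := mul_one _
      _ ≤ R := le_max_left _ _
  -- summability helper
  have hsummable_of_bound : ∀ (g : ℕ → ℝ) (M : ℝ), (∀ n, |g n| ≤ M) →
      Summable (fun n : ℕ => (1/2:ℝ)^n * g n) := by
    intro g M hg
    apply Summable.of_norm
    apply Summable.of_nonneg_of_le (fun n => norm_nonneg _) _
      ((summable_geometric_of_lt_one (r := (1/2:ℝ)) (by norm_num) (by norm_num)).mul_right M)
    intro n
    rw [Real.norm_eq_abs, abs_mul, abs_of_nonneg (pow_nonneg (by norm_num : (0:ℝ) ≤ 1/2) n)]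
    exact mul_le_mul_of_nonneg_left (hg n) (pow_nonneg (by norm_num) n)
  -- the quadratic function
  set f : WeakDual ℝ Φ → ℝ := fun p => ∑' n : ℕ, (1/2:ℝ)^n * (p (y n))^2 with hfdef
  have hsq_bound : ∀ p ∈ C, ∀ n, |(p (y n))^2| ≤ R^2 := by
    intro p hp n
    rw [abs_of_nonneg (sq_nonneg _)]
    have h := abs_le.mp (hbound p hp n)
    exact sq_le_sq' (by linarith [h.1]) h.2
  have hfcont : ContinuousOn f C := by
    apply continuousOn_tsum (u := fun n => (1/2:ℝ)^n * R^2)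
    · intro n
      exact (continuous_const.mul ((WeakDual.eval_continuous (y n)).pow 2)).continuousOn
    · exact (summable_geometric_of_lt_one (r := (1/2:ℝ)) (by norm_num) (by norm_num)).mul_right _
    · intro n p hp
      rw [Real.norm_eq_abs, abs_mul, abs_of_nonneg (pow_nonneg (by norm_num : (0:ℝ) ≤ 1/2) n)]
      exact mul_le_mul_of_nonneg_left (hsq_bound p hp n) (pow_nonneg (by norm_num) n)
  -- maximizer of f on K
  obtain ⟨pb, hpbK, hpbmax⟩ := hKcomp.exists_isMaxOn hKne (hfcont.mono hKsubC)
  have hpbC : pb ∈ C := hKsubC hpbK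
  set b : ℕ → ℝ := fun n => pb (y n) with hbdef
  have hbR : ∀ n, |b n| ≤ R := fun n => hbound pb hpbC n
  set w : ℕ → Φ := fun n => ((1/2:ℝ)^n * (2 * b n)) • y n with hwdef
  have hwsum : Summable w := by
    apply Summable.of_norm
    apply Summable.of_nonneg_of_le (fun n => norm_nonneg _) _
      ((summable_geometric_of_lt_one (r := (1/2:ℝ)) (by norm_num) (by norm_num)).mul_right (2*R))
    intro n
    rw [hwdef]
    simp only [norm_smul, Real.norm_eq_abs, abs_mul]
    rw [abs_of_nonneg (pow_nonneg (by norm_num : (0:ℝ) ≤ 1/2) n)]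
    have h1 : |2| * |b n| ≤ 2 * R := by
      rw [abs_two]
      exact mul_le_mul_of_nonneg_left (hbR n) (by norm_num)
    calc (1/2:ℝ)^n * (|2| * |b n|) * ‖y n‖ ≤ (1/2:ℝ)^n * (2*R) * 1 := by
          apply mul_le_mul (mul_le_mul_of_nonneg_left h1 (pow_nonneg (by norm_num) n))
            (hynorm n) (norm_nonneg _) (by positivity)
      _ = (1/2:ℝ)^n * (2*R) := mul_one _
  set x : Φ := ∑' n, w n with hxdef
  have happly : ∀ q : WeakDual ℝ Φ, q x = ∑' n : ℕ, (1/2:ℝ)^n * ((2 * b n) * q (y n)) := by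
    intro q
    rw [hxdef]
    rw [show (q (∑' n, w n) : ℝ) = WeakDual.toStrongDual q (∑' n, w n) from rfl]
    rw [(WeakDual.toStrongDual q).map_tsum hwsum]
    congr 1; funext n
    rw [hwdef]
    simp only [map_smul, smul_eq_mul, WeakDual.toStrongDual_apply]
    ring
  -- key strict inequality
  have hkey : ∀ q ∈ K, q ≠ pb → q x < pb x := by
    intro q hqK hqne
    have hqC : q ∈ C := hKsubC hqK
    have haR : ∀ n, |q (y n)| ≤ R := fun n => hbound q hqC n
    have habR : ∀ n, |q (y n) - b n| ≤ 2 * R := by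
      intro n
      calc |q (y n) - b n| ≤ |q (y n)| + |b n| := abs_sub _ _
        _ ≤ R + R := add_le_add (haR n) (hbR n)
        _ = 2 * R := by ring
    have s2 : Summable (fun n : ℕ => (1/2:ℝ)^n * (b n)^2) :=
      hsummable_of_bound _ (R^2) (fun n => hsq_bound pb hpbC n)
    have s3 : Summable (fun n : ℕ => (1/2:ℝ)^n * ((2 * b n) * (q (y n) - b n))) := by
      apply hsummable_of_bound _ (2*R*(2*R))
      intro n
      rw [abs_mul, abs_mul, abs_two]
      apply mul_le_mul (mul_le_mul_of_nonneg_left (hbR n) (by norm_num)) (habR n)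
        (abs_nonneg _) (by positivity)
    have s4 : Summable (fun n : ℕ => (1/2:ℝ)^n * (q (y n) - b n)^2) := by
      apply hsummable_of_bound _ ((2*R)^2)
      intro n
      rw [abs_of_nonneg (sq_nonneg _)]
      have h := abs_le.mp (habR n)
      exact sq_le_sq' (by linarith [h.1]) h.2
    have s3q : Summable (fun n : ℕ => (1/2:ℝ)^n * ((2 * b n) * q (y n))) := by
      apply hsummable_of_bound _ (2*R*R)
      intro n
      rw [abs_mul, abs_mul, abs_two]
      apply mul_le_mul (mul_le_mul_of_nonneg_left (hbR n) (by norm_num)) (haR n)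
        (abs_nonneg _) (by positivity)
    have s3b : Summable (fun n : ℕ => (1/2:ℝ)^n * ((2 * b n) * b n)) := by
      apply hsummable_of_bound _ (2*R*R)
      intro n
      rw [abs_mul, abs_mul, abs_two]
      apply mul_le_mul (mul_le_mul_of_nonneg_left (hbR n) (by norm_num)) (hbR n)
        (abs_nonneg _) (by positivity)
    have hfq : f q = ∑' n : ℕ, (1/2:ℝ)^n * (q (y n))^2 := rfl
    have hfpb : f pb = ∑' n : ℕ, (1/2:ℝ)^n * (b n)^2 := rfl
    have hsum_eq : f q = f pb
        + (∑' n : ℕ, (1/2:ℝ)^n * ((2 * b n) * (q (y n) - b n)))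
        + ∑' n : ℕ, (1/2:ℝ)^n * (q (y n) - b n)^2 := by
      rw [hfq, hfpb]
      have hpt : (fun n : ℕ => (1/2:ℝ)^n * (q (y n))^2)
          = fun n : ℕ => (1/2:ℝ)^n * (b n)^2
            + ((1/2:ℝ)^n * ((2 * b n) * (q (y n) - b n)) + (1/2:ℝ)^n * (q (y n) - b n)^2) := by
        funext n; ring
      rw [hpt, Summable.tsum_add s2 (s3.add s4), Summable.tsum_add s3 s4]
      ring
    have hS : 0 < ∑' n : ℕ, (1/2:ℝ)^n * (q (y n) - b n)^2 := by
      obtain ⟨n0, hn0⟩ := hysep q hqC pb hpbC hqne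
      apply Summable.tsum_pos s4 (fun n => by positivity) n0
      have hne : q (y n0) - b n0 ≠ 0 := sub_ne_zero.mpr hn0
      positivity
    have hfle : f q ≤ f pb := hpbmax hqK
    have hqpb : q x - pb x = ∑' n : ℕ, (1/2:ℝ)^n * ((2 * b n) * (q (y n) - b n)) := by
      rw [happly q, happly pb, ← Summable.tsum_sub s3q s3b]
      congr 1; funext n; ring
    linarith
  -- pb is an extreme point of K
  have hpbext : pb ∈ Set.extremePoints ℝ K := by
    rw [mem_extremePoints]
    refine ⟨hpbK, fun x₁ hx₁ x₂ hx₂ hseg => ?_⟩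
    obtain ⟨c, d, hc, hd, hcd, hsum⟩ := hseg
    have heval : c * x₁ x + d * x₂ x = pb x := by rw [← hsum]; rfl
    have hle1 : x₁ x ≤ pb x := by
      rcases eq_or_ne x₁ pb with h | h
      · rw [h]
      · exact (hkey x₁ hx₁ h).le
    have hle2 : x₂ x ≤ pb x := by
      rcases eq_or_ne x₂ pb with h | h
      · rw [h]
      · exact (hkey x₂ hx₂ h).le
    have hid : c * pb x + d * pb x = pb x := by rw [← add_mul, hcd, one_mul]
    constructor
    · by_contra h1
      have hlt1 := hkey x₁ hx₁ h1
      linarith [mul_lt_mul_of_pos_left hlt1 hc, mul_le_mul_of_nonneg_left hle2 hd.le]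
    · by_contra h2
      have hlt2 := hkey x₂ hx₂ h2
      linarith [mul_lt_mul_of_pos_left hlt2 hd, mul_le_mul_of_nonneg_left hle1 hc.le]
  exact ⟨⟨pb, hpbK, x, fun q hqK hqne => hkey q hqK hqne⟩,
    hext.extremePoints_subset_extremePoints,
    ⟨pb, hext.extremePoints_subset_extremePoints hpbext, fun i => ((hmemK pb).1 hpbK i).2⟩⟩
end
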